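/- Let L be a finite join-semidistributive lattice and let j be a join-irreducible element of L such that K(j) has no greatest element. Let X be the set of join-irreducible elements j' ≠ j such that {j, j'} is a face of the canonical join complex. Let A be a nonempty antichain contained in X with ⋁A ∨ j = ⋁A ∨ j_* that is minimal in join-refinement among all antichains Y ⊆ X with ⋁Y ∨ j = ⋁Y ∨ j_*. Then A is minimal with this property among all antichains in 𝒜_j: every antichain B ∈ 𝒜_j with ⋁B ∨ j = ⋁B ∨ j_* that join-refines A equals A. -/

import Mathlib

universe u v

def JoinSemidistrib (α : Type*) [Lattice α] : Prop :=
  ∀ x y z : α, x ⊔ y = x ⊔ z → x ⊔ (y ⊓ z) = x ⊔ y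

def MeetSemidistrib (α : Type*) [Lattice α] : Prop :=
  ∀ x y z : α, x ⊓ y = x ⊓ z → x ⊓ (y ⊔ z) = x ⊓ y

section JoinDefs

variable {α : Type*} [Lattice α] [OrderBot α]

/-- `j` is join-irreducible: not the bottom element, and `j = a ⊔ b` implies `j = a` or `j = b`. -/
def JoinIrred (j : α) : Prop :=
  j ≠ ⊥ ∧ ∀ a b : α, j = a ⊔ b → j = a ∨ j = b

/-- `A` join-refines `B`: every element of `A` is below some element of `B`. -/
def JoinRefines (A B : Finset α) : Prop :=
  ∀ a ∈ A, ∃ b ∈ B, a ≤ b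

/-- `A` is an irredundant join representation of `w`. -/
def IrredJoinRep (A : Finset α) (w : α) : Prop :=
  A.sup id = w ∧ ∀ A' ⊂ A, A'.sup id < w

/-- `A` is the canonical join representation of `w`: the irredundant join representation
of `w` that join-refines every irredundant join representation of `w`. -/
def CanonicalJoinRep (A : Finset α) (w : α) : Prop :=
  IrredJoinRep A w ∧ ∀ B : Finset α, IrredJoinRep B w → JoinRefines A B

/-- `A` joins canonically, i.e. `A` is a face of the canonical join complex. -/
def JoinsCanonically (A : Finset α) : Prop :=
  CanonicalJoinRep A (A.sup id)

/-- `j` is a canonical joinand of `w`. -/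
def CanonicalJoinand (j w : α) : Prop :=
  ∃ A : Finset α, CanonicalJoinRep A w ∧ j ∈ A

end JoinDefs

/-- The canonical join complex is flag: any finite set of join-irreducible elements all of
whose two-element subsets are faces is itself a face. -/
def FlagCanonicalJoinComplex (α : Type*) [Lattice α] [OrderBot α] [DecidableEq α] : Prop :=
  ∀ F : Finset α, (∀ j ∈ F, JoinIrred j) →
    (∀ j ∈ F, ∀ j' ∈ F, j ≠ j' → JoinsCanonically ({j, j'} : Finset α)) →
    JoinsCanonically F

/-- A lattice is crosscut-simplicial if for every `x ≤ y` and every proper subset `S` of the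
set of atoms of the interval `[x, y]` (elements `a` with `x ⋖ a` and `a ≤ y`), the join of `x`
with all elements of `S` is strictly less than `y`. -/
def CrosscutSimplicial (β : Type*) [Lattice β] : Prop :=
  ∀ x y : β, x ≤ y → ∀ S : Finset β,
    (∀ a ∈ S, x ⋖ a ∧ a ≤ y) →
    (∃ a : β, (x ⋖ a ∧ a ≤ y) ∧ a ∉ S) →
    S.fold (· ⊔ · : β → β → β) x id < y

section MeetDefs

variable {α : Type*} [Lattice α] [OrderTop α]

/-- `m` is meet-irreducible: not the top element, and `m = a ⊓ b` implies `m = a` or `m = b`. -/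
def MeetIrred (m : α) : Prop :=
  m ≠ ⊤ ∧ ∀ a b : α, m = a ⊓ b → m = a ∨ m = b

/-- `A` meet-refines `B`: every element of `A` is above some element of `B`. -/
def MeetRefines (A B : Finset α) : Prop :=
  ∀ a ∈ A, ∃ b ∈ B, b ≤ a

/-- `A` is an irredundant meet representation of `w`. -/
def IrredMeetRep (A : Finset α) (w : α) : Prop :=
  A.inf id = w ∧ ∀ A' ⊂ A, w < A'.inf id

/-- `A` is the canonical meet representation of `w`. -/
def CanonicalMeetRep (A : Finset α) (w : α) : Prop :=
  IrredMeetRep A w ∧ ∀ B : Finset α, IrredMeetRep B w → MeetRefines A B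

/-- `A` meets canonically, i.e. `A` is a face of the canonical meet complex. -/
def MeetsCanonically (A : Finset α) : Prop :=
  CanonicalMeetRep A (A.inf id)

end MeetDefs

/-- The canonical meet complex is flag. -/
def FlagCanonicalMeetComplex (α : Type*) [Lattice α] [OrderTop α] [DecidableEq α] : Prop :=
  ∀ F : Finset α, (∀ m ∈ F, MeetIrred m) →
    (∀ m ∈ F, ∀ m' ∈ F, m ≠ m' → MeetsCanonically ({m, m'} : Finset α)) →
    MeetsCanonically F


set_option linter.unusedSectionVars false
set_option linter.unusedVariables false

section AuxLemmas

open Finset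

variable {α : Type*} [Lattice α] [OrderBot α] [Fintype α] [DecidableEq α]

lemma finset_exists_maximal_old {β : Type*} [Preorder β] (s : Finset β) (h : s.Nonempty) :
    ∃ m ∈ s, ∀ x ∈ s, ¬ m < x := by
  obtain ⟨m, hm, hmax⟩ := Finset.exists_maximal h
  exact ⟨m, hm, fun x hx hlt => hlt.not_ge (hmax hx hlt.le)⟩

lemma finset_exists_minimal_old {β : Type*} [Preorder β] (s : Finset β) (h : s.Nonempty) :
    ∃ m ∈ s, ∀ x ∈ s, ¬ x < m := by
  obtain ⟨m, hm, hmin⟩ := Finset.exists_minimal h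
  exact ⟨m, hm, fun x hx hlt => hlt.not_ge (hmin hx hlt.le)⟩

lemma joinRefines_trans' {A B C : Finset α} (h1 : JoinRefines A B) (h2 : JoinRefines B C) :
    JoinRefines A C := by
  intro a ha
  obtain ⟨b, hb, hab⟩ := h1 a ha
  obtain ⟨c, hc, hbc⟩ := h2 b hb
  exact ⟨c, hc, hab.trans hbc⟩

lemma joinRefines_antisymm' {A B : Finset α}
    (hA : IsAntichain (· ≤ ·) (↑A : Set α)) (hB : IsAntichain (· ≤ ·) (↑B : Set α))
    (h1 : JoinRefines A B) (h2 : JoinRefines B A) : A = B := by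
  have key : ∀ (U V : Finset α), IsAntichain (· ≤ ·) (↑U : Set α) →
      JoinRefines U V → JoinRefines V U → U ⊆ V := by
    intro U V hU hUV hVU u hu
    obtain ⟨v, hv, huv⟩ := hUV u hu
    obtain ⟨u', hu', hvu'⟩ := hVU v hv
    have huu' : u = u' := by
      by_contra hne
      exact hU (Finset.mem_coe.mpr hu) (Finset.mem_coe.mpr hu') hne (huv.trans hvu')
    have huv' : u = v := le_antisymm huv (by rw [huu']; exact hvu')
    exact huv' ▸ hv
  exact Finset.Subset.antisymm (key A B hA h1 h2) (key B A hB h2 h1)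

lemma exists_irred_subrep' (D : Finset α) (w : α) (h : D.sup id = w) :
    ∃ D', D' ⊆ D ∧ IrredJoinRep D' w := by
  classical
  revert h
  induction D using Finset.strongInductionOn with
  | _ D IH =>
    intro h
    by_cases hD : ∃ E, E ⊂ D ∧ E.sup id = w
    · obtain ⟨E, hED, hE⟩ := hD
      obtain ⟨D', hD'E, hD'⟩ := IH E hED hE
      exact ⟨D', hD'E.trans hED.subset, hD'⟩
    · push_neg at hD
      refine ⟨D, Finset.Subset.refl D, h, ?_⟩
      intro E hE
      exact lt_of_le_of_ne (h ▸ Finset.sup_mono hE.subset) (hD E hE)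

lemma sup_erase_eq' {C : Finset α} {x y : α} (hx : x ∈ C) (hy : y ∈ C) (hne : x ≠ y)
    (hle : x ≤ y) : (C.erase x).sup id = C.sup id := by
  refine le_antisymm (Finset.sup_mono (Finset.erase_subset _ _)) (Finset.sup_le ?_)
  intro z hz
  by_cases hzx : z = x
  · subst hzx
    exact hle.trans (Finset.le_sup (f := id) (Finset.mem_erase.mpr ⟨hne.symm, hy⟩))
  · exact Finset.le_sup (f := id) (Finset.mem_erase.mpr ⟨hzx, hz⟩)

lemma irred_antichain' {C : Finset α} {w : α} (h : IrredJoinRep C w) :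
    IsAntichain (· ≤ ·) (↑C : Set α) := by
  intro x hx y hy hne hle
  have hx' := Finset.mem_coe.mp hx
  have hy' := Finset.mem_coe.mp hy
  have h1 := h.2 (C.erase x) (Finset.erase_ssubset hx')
  rw [sup_erase_eq' hx' hy' hne hle, h.1] at h1
  exact lt_irrefl w h1

lemma lt_le_cover' {x w : α} (h : x < w) : ∃ v, x ≤ v ∧ v ⋖ w := by
  classical
  obtain ⟨m, hm, hmax⟩ := finset_exists_maximal_old
    (Finset.univ.filter (fun y => x ≤ y ∧ y < w)) ⟨x, by simp [h]⟩
  have hm' := (Finset.mem_filter.mp hm).2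
  refine ⟨m, hm'.1, hm'.2, ?_⟩
  intro y hy hyw
  exact hmax y (Finset.mem_filter.mpr ⟨Finset.mem_univ _, hm'.1.trans hy.le, hyw⟩) hy

lemma cover_sup' {v w d : α} (hvw : v ⋖ w) (hd : d ≤ w) (hnd : ¬ d ≤ v) : v ⊔ d = w := by
  have h1 : v < v ⊔ d := lt_of_le_of_ne le_sup_left (fun h => hnd (sup_eq_left.mp h.symm))
  have h2 : v ⊔ d ≤ w := sup_le hvw.lt.le hd
  rcases eq_or_lt_of_le h2 with h | h
  · exact h
  · exact absurd h (hvw.2 h1)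

noncomputable def maxE (s : Finset α) : Finset α :=
  @Finset.filter _ (fun a => ∀ b ∈ s, a ≤ b → a = b) (Classical.decPred _) s

lemma mem_maxE {s : Finset α} {a : α} :
    a ∈ maxE s ↔ a ∈ s ∧ ∀ b ∈ s, a ≤ b → a = b := by
  unfold maxE
  exact @Finset.mem_filter _ _ (Classical.decPred _) _ _

lemma maxE_subset {s : Finset α} : maxE s ⊆ s := fun a ha => (mem_maxE.mp ha).1

lemma exists_le_maxE (s : Finset α) (x : α) (hx : x ∈ s) :
    ∃ y ∈ maxE s, x ≤ y := by
  classical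
  obtain ⟨m, hm, hmax⟩ := finset_exists_maximal_old (s.filter (fun a => x ≤ a)) ⟨x, by simp [hx]⟩
  have hm1 : m ∈ s := (Finset.mem_filter.mp hm).1
  have hm2 : x ≤ m := (Finset.mem_filter.mp hm).2
  refine ⟨m, mem_maxE.mpr ⟨hm1, ?_⟩, hm2⟩
  intro b hb hmb
  by_contra hne
  exact hmax b (Finset.mem_filter.mpr ⟨hb, hm2.trans hmb⟩) (lt_of_le_of_ne hmb hne)

lemma sup_maxE (s : Finset α) : (maxE s).sup id = s.sup id := by
  refine le_antisymm (Finset.sup_mono maxE_subset) (Finset.sup_le ?_)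
  intro x hx
  obtain ⟨y, hy, hxy⟩ := exists_le_maxE s x hx
  exact hxy.trans (Finset.le_sup (f := id) hy)

lemma antichain_maxE (s : Finset α) :
    IsAntichain (· ≤ ·) (↑(maxE s) : Set α) := by
  intro x hx y hy hne hle
  have hx' := mem_maxE.mp (Finset.mem_coe.mp hx)
  have hy' := mem_maxE.mp (Finset.mem_coe.mp hy)
  exact hne (hx'.2 y hy'.1 hle)

lemma cjr_exists' (hjsd : JoinSemidistrib α) (w : α) :
    ∃ C : Finset α, CanonicalJoinRep C w := by
  classical
  have hmin : ∀ v : α, v ⋖ w → ∃ g : α, g ⊔ v = w ∧ ∀ x : α, x ⊔ v = w → g ≤ x := by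
    intro v hv
    obtain ⟨m, hm, hmax⟩ := finset_exists_minimal_old
      (Finset.univ.filter (fun x => x ⊔ v = w))
      ⟨w, by simp [Finset.mem_filter, sup_eq_left.mpr hv.lt.le]⟩
    have hm' : m ⊔ v = w := (Finset.mem_filter.mp hm).2
    refine ⟨m, hm', ?_⟩
    intro x hx
    have h1 : v ⊔ m = v ⊔ x := by rw [sup_comm v m, sup_comm v x, hm', hx]
    have h2 := hjsd v m x h1
    have hmx : (m ⊓ x) ⊔ v = w := by
      rw [sup_comm, h2, sup_comm, hm']
    have hne : ¬ (m ⊓ x) < m := hmax _ (by simp [Finset.mem_filter, hmx])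
    have heq : m ⊓ x = m := by
      rcases lt_or_eq_of_le (inf_le_left : m ⊓ x ≤ m) with h | h
      · exact absurd h hne
      · exact h
    exact heq ▸ inf_le_right
  set Γ : Finset α := Finset.univ.filter
      (fun x => ∃ v : α, v ⋖ w ∧ x ⊔ v = w ∧ ∀ y : α, y ⊔ v = w → x ≤ y) with hΓdef
  have hΓle : ∀ x ∈ Γ, x ≤ w := by
    intro x hx
    obtain ⟨v, hv, hxv, -⟩ := (Finset.mem_filter.mp hx).2
    exact le_trans le_sup_left (le_of_eq hxv)
  refine ⟨maxE Γ, ⟨⟨?_, ?_⟩, ?_⟩⟩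
  · -- sup = w
    have hle : (maxE Γ).sup id ≤ w := Finset.sup_le fun x hx => hΓle x (maxE_subset hx)
    rcases eq_or_lt_of_le hle with h | h
    · exact h
    · exfalso
      obtain ⟨v, hv1, hv2⟩ := lt_le_cover' h
      obtain ⟨g, hg1, hg2⟩ := hmin v hv2
      have hgΓ : g ∈ Γ := Finset.mem_filter.mpr ⟨Finset.mem_univ _, ⟨v, hv2, hg1, hg2⟩⟩
      obtain ⟨y, hyC, hgy⟩ := exists_le_maxE Γ g hgΓ
      have hyv : y ≤ v := le_trans (Finset.le_sup (f := id) hyC) hv1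
      have hgv : g ≤ v := hgy.trans hyv
      have : w = v := by rw [← hg1]; exact sup_eq_right.mpr hgv
      exact hv2.lt.ne this.symm
  · -- irredundant
    intro C' hC'
    obtain ⟨x₀, hx₀C, hx₀C'⟩ := Finset.exists_of_ssubset hC'
    have hx₀Γ : x₀ ∈ Γ := maxE_subset hx₀C
    obtain ⟨v₀, hv₀, hx₀v₀, hx₀min⟩ := (Finset.mem_filter.mp hx₀Γ).2
    have hsub : C'.sup id ≤ v₀ := by
      apply Finset.sup_le
      intro y hy
      by_contra hyv
      have hyΓ : y ∈ Γ := maxE_subset (hC'.subset hy)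
      have hyw : y ≤ w := hΓle y hyΓ
      have : v₀ ⊔ y = w := cover_sup' hv₀ hyw hyv
      have hx₀y : x₀ ≤ y := hx₀min y (by rw [sup_comm]; exact this)
      have : x₀ = y := (mem_maxE.mp hx₀C).2 y hyΓ hx₀y
      exact hx₀C' (this ▸ hy)
    exact lt_of_le_of_lt hsub hv₀.lt
  · -- refines every irredundant rep
    intro D hD x hx
    have hxΓ : x ∈ Γ := maxE_subset hx
    obtain ⟨v, hv, hxv, hxmin⟩ := (Finset.mem_filter.mp hxΓ).2
    have : ¬ D.sup id ≤ v := by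
      rw [hD.1]; intro h; exact hv.lt.ne (le_antisymm h hv.lt.le).symm
    obtain ⟨d, hd, hdv⟩ : ∃ d ∈ D, ¬ d ≤ v := by
      by_contra hcon
      push_neg at hcon
      exact this (Finset.sup_le hcon)
    have hdw : d ≤ w := by rw [← hD.1]; exact Finset.le_sup (f := id) hd
    have : v ⊔ d = w := cover_sup' hv hdw hdv
    exact ⟨d, hd, hxmin d (by rw [sup_comm]; exact this)⟩

lemma cjr_joinIrred' {C : Finset α} {w c : α} (hC : CanonicalJoinRep C w) (hc : c ∈ C) :
    JoinIrred c := by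
  classical
  have hanti := irred_antichain' hC.1
  constructor
  · intro hbot
    have h1 : (C.erase c).sup id = C.sup id := by
      refine le_antisymm (Finset.sup_mono (Finset.erase_subset _ _)) (Finset.sup_le ?_)
      intro z hz
      by_cases hzc : z = c
      · subst hzc
        show id z ≤ _
        rw [id_eq, hbot]
        exact bot_le
      · exact Finset.le_sup (f := id) (Finset.mem_erase.mpr ⟨hzc, hz⟩)
    have h2 := hC.1.2 (C.erase c) (Finset.erase_ssubset hc)
    rw [h1, hC.1.1] at h2
    exact lt_irrefl w h2
  · intro p q hpq
    by_contra hcon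
    push_neg at hcon
    have hple : p ≤ c := by rw [hpq]; exact le_sup_left
    have hqle : q ≤ c := by rw [hpq]; exact le_sup_right
    have hp : p < c := lt_of_le_of_ne hple (fun h => hcon.1 h.symm)
    have hq : q < c := lt_of_le_of_ne hqle (fun h => hcon.2 h.symm)
    have he : c ⊔ (C.erase c).sup id = w := by
      have h1 : (insert c (C.erase c)).sup id = C.sup id := by
        rw [Finset.insert_erase hc]
      rw [Finset.sup_insert] at h1
      rw [← hC.1.1, ← h1]
      rfl
    have hsup : (insert p (insert q (C.erase c))).sup id = w := by
      rw [Finset.sup_insert, Finset.sup_insert]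
      show p ⊔ (q ⊔ _) = w
      rw [← sup_assoc, ← hpq, he]
    obtain ⟨D', hD'sub, hD'⟩ := exists_irred_subrep' _ w hsup
    obtain ⟨d, hd, hcd⟩ := hC.2 D' hD' c hc
    have hd0 := hD'sub hd
    rcases Finset.mem_insert.mp hd0 with h | h
    · subst h; exact lt_irrefl c (lt_of_le_of_lt hcd hp)
    rcases Finset.mem_insert.mp h with h | h
    · subst h; exact lt_irrefl c (lt_of_le_of_lt hcd hq)
    · have hdC := Finset.mem_of_mem_erase h
      have hdne : d ≠ c := (Finset.mem_erase.mp h).1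
      exact hanti (Finset.mem_coe.mpr hc) (Finset.mem_coe.mpr hdC) (fun hh => hdne hh.symm) hcd

lemma joinIrred_exists_max_lt' {c : α} (hc : JoinIrred c) :
    ∃ m, m < c ∧ ∀ x, x < c → x ≤ m := by
  classical
  obtain ⟨m, hm, hmax⟩ := finset_exists_maximal_old (Finset.univ.filter (fun x => x < c))
    ⟨⊥, by simp [bot_lt_iff_ne_bot.mpr hc.1]⟩
  have hmc : m < c := (Finset.mem_filter.mp hm).2
  refine ⟨m, hmc, ?_⟩
  intro x hx
  have hxm : x ⊔ m ≤ c := sup_le hx.le hmc.le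
  have hlt : x ⊔ m < c := by
    rcases lt_or_eq_of_le hxm with h | h
    · exact h
    · rcases hc.2 x m h.symm with h' | h'
      · exact absurd h'.symm hx.ne
      · exact absurd h'.symm hmc.ne
  have : ¬ m < x ⊔ m := hmax _ (by simp [Finset.mem_filter, hlt])
  have : x ⊔ m = m := by
    rcases lt_or_eq_of_le (le_sup_right : m ≤ x ⊔ m) with h | h
    · exact absurd h this
    · exact h.symm
  exact le_trans le_sup_left this.le

lemma pair_face' (hjsd : JoinSemidistrib α) {j c jstar cs : α}
    (hjst : ∀ x, x < j → x ≤ jstar) (hcs : ∀ x, x < c → x ≤ cs)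
    (hjc : ¬ j ≤ c) (hcj : ¬ c ≤ j)
    (ha : ¬ j ≤ c ⊔ jstar) (hb : ¬ c ≤ j ⊔ cs) :
    JoinsCanonically ({j, c} : Finset α) := by
  classical
  obtain ⟨C, hC⟩ := cjr_exists' hjsd (j ⊔ c)
  have hne : j ≠ c := fun h => hjc h.le
  have hsup : ({j, c} : Finset α).sup id = j ⊔ c := by
    rw [Finset.sup_insert, Finset.sup_singleton]; rfl
  have hcltw : c < j ⊔ c := lt_of_le_of_ne le_sup_right
    (fun h => hjc (by rw [h]; exact le_sup_left))
  have hjltw : j < j ⊔ c := lt_of_le_of_ne le_sup_left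
    (fun h => hcj (by rw [h]; exact le_sup_right))
  have hpair_irr : IrredJoinRep ({j, c} : Finset α) (j ⊔ c) := by
    refine ⟨hsup, ?_⟩
    intro E hE
    have hsubs : ∀ e ∈ E, e = j ∨ e = c := by
      intro e he
      have := hE.subset he
      simpa using this
    by_cases hcE : c ∈ E
    · have hjE : j ∉ E := by
        intro hjE
        refine hE.ne (Finset.Subset.antisymm hE.subset ?_)
        intro z hz
        rcases Finset.mem_insert.mp hz with h | h
        · exact h ▸ hjE
        · exact (Finset.mem_singleton.mp h) ▸ hcE
      have hEc : E.sup id ≤ c := by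
        apply Finset.sup_le
        intro e he
        rcases hsubs e he with h | h
        · exact absurd (h ▸ he) hjE
        · exact h.le
      exact lt_of_le_of_lt hEc hcltw
    · have hEj : E.sup id ≤ j := by
        apply Finset.sup_le
        intro e he
        rcases hsubs e he with h | h
        · exact h.le
        · exact absurd (h ▸ he) hcE
      exact lt_of_le_of_lt hEj hjltw
  have href : JoinRefines C ({j, c} : Finset α) := hC.2 _ hpair_irr
  have hanti := irred_antichain' hC.1
  have hjC : j ∈ C := by
    by_contra hjCn
    have hsC : C.sup id ≤ c ⊔ jstar := by
      apply Finset.sup_le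
      intro γ hγ
      obtain ⟨b, hbmem, hγb⟩ := href γ hγ
      rcases Finset.mem_insert.mp hbmem with h | h
      · rw [h] at hγb
        have hγlt : γ < j := lt_of_le_of_ne hγb (fun h' => hjCn (h' ▸ hγ))
        exact (hjst γ hγlt).trans le_sup_right
      · rw [Finset.mem_singleton] at h
        rw [h] at hγb
        exact le_trans hγb le_sup_left
    rw [hC.1.1] at hsC
    exact ha (le_sup_left.trans hsC)
  have hcC : c ∈ C := by
    by_contra hcCn
    have hsC : C.sup id ≤ j ⊔ cs := by
      apply Finset.sup_le
      intro γ hγ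
      obtain ⟨b, hbmem, hγb⟩ := href γ hγ
      rcases Finset.mem_insert.mp hbmem with h | h
      · rw [h] at hγb
        exact le_trans hγb le_sup_left
      · rw [Finset.mem_singleton] at h
        rw [h] at hγb
        have hγlt : γ < c := lt_of_le_of_ne hγb (fun h' => hcCn (h' ▸ hγ))
        exact (hcs γ hγlt).trans le_sup_right
    rw [hC.1.1] at hsC
    exact hb (le_sup_right.trans hsC)
  have hCeq : C = ({j, c} : Finset α) := by
    apply Finset.Subset.antisymm
    · intro γ hγ
      obtain ⟨b, hbmem, hγb⟩ := href γ hγ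
      rcases Finset.mem_insert.mp hbmem with h | h
      · rw [h] at hγb
        have : γ = j := by
          by_contra hne'
          exact hanti (Finset.mem_coe.mpr hγ) (Finset.mem_coe.mpr hjC) hne' hγb
        simp [this]
      · rw [Finset.mem_singleton] at h
        rw [h] at hγb
        have : γ = c := by
          by_contra hne'
          exact hanti (Finset.mem_coe.mpr hγ) (Finset.mem_coe.mpr hcC) hne' hγb
        simp [this]
    · intro z hz
      rcases Finset.mem_insert.mp hz with h | h
      · exact h ▸ hjC
      · exact (Finset.mem_singleton.mp h) ▸ hcC
  show CanonicalJoinRep ({j, c} : Finset α) (({j, c} : Finset α).sup id)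
  rw [hsup]
  exact hCeq ▸ hC

lemma face_not_le' {j a jstar : α} (hface : JoinsCanonically ({j, a} : Finset α))
    (hne : j ≠ a) (hjst : jstar < j) : ¬ j ≤ a ⊔ jstar := by
  classical
  intro h
  have hsup : ({j, a} : Finset α).sup id = j ⊔ a := by
    rw [Finset.sup_insert, Finset.sup_singleton]; rfl
  have hja : ¬ j ≤ a := by
    intro hja
    have hss : ({a} : Finset α) ⊂ ({j, a} : Finset α) := by
      refine Finset.ssubset_iff_subset_ne.mpr ⟨?_, ?_⟩
      · intro z hz
        rw [Finset.mem_singleton] at hz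
        subst hz
        exact Finset.mem_insert_of_mem (Finset.mem_singleton_self _)
      · intro heq
        have : j ∈ ({a} : Finset α) := by rw [heq]; exact Finset.mem_insert_self _ _
        exact hne (Finset.mem_singleton.mp this)
    have h1 := hface.1.2 ({a} : Finset α) hss
    rw [Finset.sup_singleton, hsup] at h1
    exact absurd (sup_le hja le_rfl) h1.not_ge
  have hsup2 : ({a, jstar} : Finset α).sup id = j ⊔ a := by
    rw [Finset.sup_insert, Finset.sup_singleton]
    show a ⊔ jstar = j ⊔ a
    refine le_antisymm (sup_le le_sup_right (hjst.le.trans le_sup_left)) (sup_le ?_ le_sup_left)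
    exact h
  obtain ⟨D', hD'sub, hD'⟩ := exists_irred_subrep' _ _ hsup2
  have hD'' : IrredJoinRep D' (({j, a} : Finset α).sup id) := by rw [hsup]; exact hD'
  obtain ⟨d, hd, hjd⟩ := hface.2 D' hD'' j (Finset.mem_insert_self _ _)
  have hd' := hD'sub hd
  rcases Finset.mem_insert.mp hd' with h' | h'
  · exact hja (h' ▸ hjd)
  · rw [Finset.mem_singleton] at h'
    exact hjst.not_ge (h' ▸ hjd)

end AuxLemmas
/-- Lemma (minimal means canonical): if `A ⊆ X` is a nonempty antichain with
`⋁A ⊔ j = ⋁A ⊔ j_*`, minimal in join-refinement among antichains contained in `X` with this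
property, then `A` is minimal with this property among all antichains in `𝒜_j`. -/
theorem stmt_13 {α : Type*} [Lattice α] [OrderBot α] [Fintype α] [DecidableEq α]
    (hjsd : JoinSemidistrib α) (j jstar : α) (hj : JoinIrred j) (hstar : jstar ⋖ j)
    (hk : ¬ ∃ m : α, IsGreatest {a : α | jstar ≤ a ∧ ¬ j ≤ a} m)
    (X : Set α)
    (hX : ∀ j' : α, j' ∈ X ↔
      JoinIrred j' ∧ j' ≠ j ∧ JoinsCanonically ({j, j'} : Finset α))
    (A : Finset α) (hAne : A.Nonempty) (hAX : ↑A ⊆ X)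
    (hAanti : IsAntichain (· ≤ ·) (↑A : Set α))
    (hAeq : A.sup id ⊔ j = A.sup id ⊔ jstar)
    (hAmin : ∀ Y : Finset α, ↑Y ⊆ X → IsAntichain (· ≤ ·) (↑Y : Set α) →
      Y.sup id ⊔ j = Y.sup id ⊔ jstar → JoinRefines Y A → Y = A) :
    ∀ B : Finset α, j ∉ B → IsAntichain (· ≤ ·) (↑B : Set α) →
      IsAntichain (· ≤ ·) (insert j (↑B : Set α)) →
      B.sup id ⊔ j = B.sup id ⊔ jstar → JoinRefines B A → B = A := by
  classical
  have hjstlt : jstar < j := hstar.lt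
  have hbelow : ∀ x, x < j → x ≤ jstar := by
    intro x hx
    have h1 : x ⊔ jstar ≤ j := sup_le hx.le hjstlt.le
    rcases lt_or_eq_of_le h1 with h | h
    · have h2 : ¬ jstar < x ⊔ jstar := fun hh => hstar.2 hh h
      have h3 : x ⊔ jstar = jstar := by
        rcases lt_or_eq_of_le (le_sup_right : jstar ≤ x ⊔ jstar) with h' | h'
        · exact absurd h' h2
        · exact h'.symm
      exact le_trans le_sup_left h3.le
    · rcases hj.2 x jstar h.symm with h' | h'
      · exact absurd h'.symm hx.ne
      · exact absurd h'.symm hjstlt.ne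
  obtain ⟨CJRf, hCJRf⟩ : ∃ f : α → Finset α, ∀ w, CanonicalJoinRep (f w) w := by
    choose f hf using cjr_exists' (α := α) hjsd
    exact ⟨f, hf⟩
  set μ : Finset α → ℕ := fun B => (Finset.univ.filter (fun x => ∃ b ∈ B, x ≤ b)).card with hμ
  suffices H : ∀ n : ℕ, ∀ B : Finset α, μ B < n → j ∉ B → IsAntichain (· ≤ ·) (↑B : Set α) →
      IsAntichain (· ≤ ·) (insert j (↑B : Set α)) →
      B.sup id ⊔ j = B.sup id ⊔ jstar → JoinRefines B A → B = A by
    intro B h1 h2 h3 h4 h5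
    exact H (μ B + 1) B (Nat.lt_succ_self _) h1 h2 h3 h4 h5
  intro n
  induction n with
  | zero => exact fun B hB => absurd hB (Nat.not_lt_zero _)
  | succ n IH =>
    intro B hμB hjB hBanti hBjanti hBeq hBA
    have hjb : ∀ b ∈ B, ¬ j ≤ b ∧ ¬ b ≤ j := by
      intro b hb
      have hne : j ≠ b := fun h => hjB (h ▸ hb)
      exact ⟨hBjanti (Set.mem_insert _ _) (Set.mem_insert_of_mem _ (Finset.mem_coe.mpr hb)) hne,
        hBjanti (Set.mem_insert_of_mem _ (Finset.mem_coe.mpr hb)) (Set.mem_insert _ _) (Ne.symm hne)⟩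
    have hjle : j ≤ B.sup id ⊔ jstar := le_sup_right.trans hBeq.le
    set T : Finset α := (B.biUnion (fun b => CJRf b)).filter (fun c => ¬ c ≤ jstar) with hT
    have hTmem : ∀ c ∈ T, ∃ b ∈ B, c ∈ CJRf b ∧ ¬ c ≤ jstar := by
      intro c hc
      have h1 := Finset.mem_filter.mp hc
      obtain ⟨b, hb, hcb⟩ := Finset.mem_biUnion.mp h1.1
      exact ⟨b, hb, hcb, h1.2⟩
    have hTprops : ∀ c ∈ T, ∃ b ∈ B, c ∈ CJRf b ∧ ¬ c ≤ jstar ∧ c ≤ b ∧ JoinIrred c ∧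
        ¬ c ≤ j ∧ ¬ j ≤ c := by
      intro c hc
      obtain ⟨b, hb, hcb, hcjst⟩ := hTmem c hc
      have hcble : c ≤ b := by
        have h1 := Finset.le_sup (f := id) hcb
        rwa [(hCJRf b).1.1] at h1
      have hcji : JoinIrred c := cjr_joinIrred' (hCJRf b) hcb
      have hcj : ¬ c ≤ j := by
        intro hcjle
        have hne : c ≠ j := fun h => (hjb b hb).1 (h ▸ hcble)
        exact hcjst (hbelow c (lt_of_le_of_ne hcjle hne))
      have hjc : ¬ j ≤ c := fun h => (hjb b hb).1 (h.trans hcble)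
      exact ⟨b, hb, hcb, hcjst, hcble, hcji, hcj, hjc⟩
    have hTsup : T.sup id ⊔ jstar = B.sup id ⊔ jstar := by
      apply le_antisymm
      · refine sup_le (Finset.sup_le ?_) le_sup_right
        intro c hc
        obtain ⟨b, hb, hcb, hcjst, hcble, -⟩ := hTprops c hc
        exact (hcble.trans (Finset.le_sup (f := id) hb)).trans le_sup_left
      · refine sup_le ?_ le_sup_right
        refine Finset.sup_le ?_
        intro b hb
        have h1 : (CJRf b).sup id = b := (hCJRf b).1.1
        rw [show (id b : α) = b from rfl, ← h1]
        refine le_trans (Finset.sup_le ?_) le_rfl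
        intro c hc
        by_cases hcj : c ≤ jstar
        · exact hcj.trans le_sup_right
        · have hcT : c ∈ T := Finset.mem_filter.mpr ⟨Finset.mem_biUnion.mpr ⟨b, hb, hc⟩, hcj⟩
          exact (Finset.le_sup (f := id) hcT).trans le_sup_left
    by_cases hgood : ∀ c ∈ T, ∀ m : α, m < c → (∀ x, x < c → x ≤ m) → ¬ c ≤ j ⊔ m
    · -- good case : build Y and use hAmin
      set Y : Finset α := maxE T with hY
      have hYsub : Y ⊆ T := maxE_subset
      have hYX : ↑Y ⊆ X := by
        intro c hc
        have hcT : c ∈ T := hYsub (Finset.mem_coe.mp hc)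
        obtain ⟨b, hb, hcb, hcjst, hcble, hcji, hcj, hjc⟩ := hTprops c hcT
        rw [hX]
        refine ⟨hcji, fun h => hjc (h ▸ le_refl c), ?_⟩
        obtain ⟨m, hmlt, hmax⟩ := joinIrred_exists_max_lt' hcji
        have haa : ¬ j ≤ c ⊔ jstar := by
          intro hle
          obtain ⟨a, haA, hba⟩ := hBA b hb
          have haX := hAX (Finset.mem_coe.mpr haA)
          rw [hX] at haX
          obtain ⟨-, hane, haface⟩ := haX
          have : j ≤ a ⊔ jstar :=
            hle.trans (sup_le ((hcble.trans hba).trans le_sup_left) le_sup_right)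
          exact face_not_le' haface (Ne.symm hane) hjstlt this
        have hbb : ¬ c ≤ j ⊔ m := hgood c hcT m hmlt hmax
        exact pair_face' hjsd hbelow hmax hjc hcj haa hbb
      have hYanti : IsAntichain (· ≤ ·) (↑Y : Set α) := antichain_maxE T
      have hYsupeq : Y.sup id ⊔ jstar = B.sup id ⊔ jstar := by
        rw [hY, sup_maxE, hTsup]
      have hYprop : Y.sup id ⊔ j = Y.sup id ⊔ jstar := by
        apply le_antisymm
        · exact sup_le le_sup_left (by rw [hYsupeq]; exact hjle)
        · exact sup_le le_sup_left (hjstlt.le.trans le_sup_right)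
      have hYeq : Y = A := hAmin Y hYX hYanti hYprop (by
        intro c hc
        obtain ⟨b, hb, -, -, hcble, -⟩ := hTprops c (hYsub hc)
        obtain ⟨a, haA, hba⟩ := hBA b hb
        exact ⟨a, haA, hcble.trans hba⟩)
      have hAB : A ⊆ B := by
        intro a ha
        have haY : a ∈ Y := by rw [hYeq]; exact ha
        obtain ⟨b, hb, -, -, hale, -⟩ := hTprops a (hYsub haY)
        obtain ⟨a', ha', hba'⟩ := hBA b hb
        have haa' : a = a' := by
          by_contra hne
          exact hAanti (Finset.mem_coe.mpr ha) (Finset.mem_coe.mpr ha') hne (hale.trans hba')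
        have hab : a = b := le_antisymm hale (by rw [haa']; exact hba')
        exact hab ▸ hb
      have hBsubA : B ⊆ A := by
        intro b hb
        obtain ⟨a, ha, hba⟩ := hBA b hb
        have hab : a ∈ B := hAB ha
        have hbeq : b = a := by
          by_contra hne
          exact hBanti (Finset.mem_coe.mpr hb) (Finset.mem_coe.mpr hab) hne hba
        exact hbeq ▸ ha
      exact Finset.Subset.antisymm hBsubA hAB
    · -- bad case : descent
      push_neg at hgood
      obtain ⟨c, hcT, m, hmlt, hmax, hcjm⟩ := hgood
      obtain ⟨b, hb, hcb, hcjst, hcble, hcji, hcj, hjc⟩ := hTprops c hcT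
      set r : α := ((CJRf b).erase c).sup id with hr
      set z : α := (B.erase b).sup id with hz
      have hbsup : c ⊔ r = b := by
        have h1 : (insert c ((CJRf b).erase c)).sup id = (CJRf b).sup id := by
          rw [Finset.insert_erase hcb]
        rw [Finset.sup_insert] at h1
        rw [(hCJRf b).1.1] at h1
        exact h1
      have hBsup : b ⊔ z = B.sup id := by
        have h1 : (insert b (B.erase b)).sup id = B.sup id := by
          rw [Finset.insert_erase hb]
        rw [Finset.sup_insert] at h1
        exact h1
      have hrb : r ≤ b := by
        rw [← hbsup]; exact le_sup_right
      have hzB : z ≤ B.sup id := by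
        rw [← hBsup]; exact le_sup_right
      have hbB : b ≤ B.sup id := Finset.le_sup (f := id) hb
      have hF4 : ¬ c ≤ r ⊔ m := by
        intro hF
        have hsupD : (insert m ((CJRf b).erase c)).sup id = b := by
          rw [Finset.sup_insert]
          show m ⊔ r = b
          apply le_antisymm
          · exact sup_le ((hmlt.le.trans hcble)) hrb
          · rw [← hbsup]
            exact sup_le (hF.trans (sup_le le_sup_right le_sup_left)) le_sup_right
        obtain ⟨D', hD'sub, hD'⟩ := exists_irred_subrep' _ b hsupD
        obtain ⟨d, hd, hcd⟩ := (hCJRf b).2 D' hD' c hcb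
        have hd0 := hD'sub hd
        rcases Finset.mem_insert.mp hd0 with h | h
        · exact hmlt.not_ge (h ▸ hcd)
        · have hdC := Finset.mem_of_mem_erase h
          have hdne : d ≠ c := (Finset.mem_erase.mp h).1
          exact irred_antichain' (hCJRf b).1 (Finset.mem_coe.mpr hcb) (Finset.mem_coe.mpr hdC)
            (fun hh => hdne hh.symm) hcd
      set x : α := z ⊔ r ⊔ m ⊔ jstar with hxdef
      have hzx : z ≤ x := le_sup_left.trans (le_sup_left.trans le_sup_left)
      have hrx : r ≤ x := le_sup_right.trans (le_sup_left.trans le_sup_left)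
      have hmx : m ≤ x := le_sup_right.trans le_sup_left
      have hjstx : jstar ≤ x := le_sup_right
      have hxc : x ⊔ c = B.sup id ⊔ jstar := by
        apply le_antisymm
        · refine sup_le (sup_le (sup_le (sup_le ?_ ?_) ?_) ?_) ?_
          · exact hzB.trans le_sup_left
          · exact (hrb.trans hbB).trans le_sup_left
          · exact ((hmlt.le.trans hcble).trans hbB).trans le_sup_left
          · exact le_sup_right
          · exact ((hcble.trans hbB)).trans le_sup_left
        · rw [← hBsup, ← hbsup]
          exact sup_le (sup_le (sup_le le_sup_right (hrx.trans le_sup_left))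
            (hzx.trans le_sup_left)) (hjstx.trans le_sup_left)
      have hxj : x ⊔ j = x ⊔ c := by
        apply le_antisymm
        · exact sup_le le_sup_left (by rw [hxc]; exact hjle)
        · exact sup_le le_sup_left (hcjm.trans (sup_le le_sup_right (hmx.trans le_sup_left)))
      have hjx : j ≤ x := by
        have h1 := hjsd x j c hxj
        have h2 : j ⊓ c ≤ x := by
          have hlt : j ⊓ c < j := lt_of_le_of_ne inf_le_left (fun h => hjc (h ▸ inf_le_right))
          exact (hbelow _ hlt).trans hjstx
        have h3 : x ⊔ (j ⊓ c) = x := sup_eq_left.mpr h2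
        rw [h3] at h1
        exact le_sup_right.trans h1.ge
      set b' : α := r ⊔ m with hb'def
      have hb'b : b' ≤ b := by
        rw [← hbsup]
        exact sup_le le_sup_right (hmlt.le.trans le_sup_left)
      have hnotbb' : ¬ b ≤ b' := fun h => hF4 (hcble.trans h)
      set N : Finset α := (insert b' (B.erase b)).filter (fun y => ¬ y ≤ jstar) with hN
      have hNmem : ∀ y ∈ N, (y = b' ∨ y ∈ B.erase b) ∧ ¬ y ≤ jstar := by
        intro y hy
        have h1 := Finset.mem_filter.mp hy
        exact ⟨Finset.mem_insert.mp h1.1, h1.2⟩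
      have hNB : ∀ y ∈ N, ∃ u ∈ B, y ≤ u := by
        intro y hy
        rcases (hNmem y hy).1 with h | h
        · exact ⟨b, hb, h ▸ hb'b⟩
        · exact ⟨y, Finset.mem_of_mem_erase h, le_rfl⟩
      have hBnotjst : ∀ y ∈ B, ¬ y ≤ jstar := by
        intro y hy hyl
        exact (hjb y hy).2 (hyl.trans hjstlt.le)
      have hNsup : N.sup id ⊔ jstar = x := by
        apply le_antisymm
        · refine sup_le (Finset.sup_le ?_) hjstx
          intro y hy
          rcases (hNmem y hy).1 with h | h
          · rw [h, hb'def]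
            exact sup_le hrx hmx
          · exact (Finset.le_sup (f := id) h).trans hzx
        · refine sup_le (sup_le (sup_le ?_ ?_) ?_) le_sup_right
          · -- z ≤ N.sup ⊔ jstar
            refine Finset.sup_le ?_
            intro y hy
            have hyB := Finset.mem_of_mem_erase hy
            have hyN : y ∈ N := Finset.mem_filter.mpr
              ⟨Finset.mem_insert_of_mem hy, hBnotjst y hyB⟩
            exact (Finset.le_sup (f := id) hyN).trans le_sup_left
          · -- r ≤ N.sup ⊔ jstar
            by_cases hb'jst : b' ≤ jstar
            · exact (le_sup_left.trans (hb'def ▸ hb'jst)).trans le_sup_right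
            · have hb'N : b' ∈ N := Finset.mem_filter.mpr ⟨Finset.mem_insert_self _ _, hb'jst⟩
              exact (le_sup_left.trans (Finset.le_sup (f := id) hb'N)).trans le_sup_left
          · -- m ≤ N.sup ⊔ jstar
            by_cases hb'jst : b' ≤ jstar
            · exact (le_sup_right.trans (hb'def ▸ hb'jst)).trans le_sup_right
            · have hb'N : b' ∈ N := Finset.mem_filter.mpr ⟨Finset.mem_insert_self _ _, hb'jst⟩
              exact (le_sup_right.trans (Finset.le_sup (f := id) hb'N)).trans le_sup_left
      set B' : Finset α := maxE N with hB'
      have hB'N : B' ⊆ N := maxE_subset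
      have hB'sup : B'.sup id ⊔ jstar = x := by rw [hB', sup_maxE, hNsup]
      have hB'prop : B'.sup id ⊔ j = B'.sup id ⊔ jstar := by
        apply le_antisymm
        · exact sup_le le_sup_left (by rw [hB'sup]; exact hjx)
        · exact sup_le le_sup_left (hjstlt.le.trans le_sup_right)
      have hjB' : j ∉ B' := by
        intro hjB'
        rcases (hNmem j (hB'N hjB')).1 with h | h
        · exact (hjb b hb).1 (h ▸ hb'b)
        · exact hjB (Finset.mem_of_mem_erase h)
      have hB'anti : IsAntichain (· ≤ ·) (↑B' : Set α) := antichain_maxE N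
      have hB'janti : IsAntichain (· ≤ ·) (insert j (↑B' : Set α)) := by
        intro p hp q hq hpq
        rcases Set.mem_insert_iff.mp hp with hp' | hp'
        · rcases Set.mem_insert_iff.mp hq with hq' | hq'
          · exact absurd (hp'.trans hq'.symm) hpq
          · -- p = j, q ∈ B' : ¬ j ≤ q
            subst hp'
            have hqN := hB'N (Finset.mem_coe.mp hq')
            rcases (hNmem q hqN).1 with h | h
            · exact fun hle => (hjb b hb).1 ((hle.trans (h ▸ hb'b)))
            · exact fun hle => (hjb q (Finset.mem_of_mem_erase h)).1 hle
        · rcases Set.mem_insert_iff.mp hq with hq' | hq'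
          · -- p ∈ B', q = j : ¬ p ≤ j
            subst hq'
            have hpN := hB'N (Finset.mem_coe.mp hp')
            intro hle
            have hpne : p ≠ q := hpq
            have hplt : p < q := lt_of_le_of_ne hle hpne
            exact (hNmem p hpN).2 (hbelow p hplt)
          · exact hB'anti hp' hq' hpq
      have hB'B : JoinRefines B' B := fun y hy => hNB y (hB'N hy)
      have hB'A : JoinRefines B' A := joinRefines_trans' hB'B hBA
      have hμlt : μ B' < μ B := by
        apply Finset.card_lt_card
        rw [Finset.ssubset_iff_of_subset]
        · refine ⟨b, ?_, ?_⟩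
          · exact Finset.mem_filter.mpr ⟨Finset.mem_univ _, b, hb, le_rfl⟩
          · intro hmem
            obtain ⟨y, hy, hby⟩ := (Finset.mem_filter.mp hmem).2
            have hyN := hB'N hy
            rcases (hNmem y hyN).1 with h | h
            · exact hnotbb' (hby.trans (h ▸ le_rfl))
            · have hyB := Finset.mem_of_mem_erase h
              have hne : b ≠ y := fun hh => (Finset.mem_erase.mp h).1 hh.symm
              exact hBanti (Finset.mem_coe.mpr hb) (Finset.mem_coe.mpr hyB) hne hby
        · intro u hu
          obtain ⟨y, hy, huy⟩ := (Finset.mem_filter.mp hu).2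
          obtain ⟨v, hv, hyv⟩ := hB'B y hy
          exact Finset.mem_filter.mpr ⟨Finset.mem_univ _, v, hv, huy.trans hyv⟩
      have hB'eq : B' = A := IH B' (lt_of_lt_of_le hμlt (Nat.lt_succ_iff.mp hμB))
        hjB' hB'anti hB'janti hB'prop hB'A
      have hArefB : JoinRefines A B := by rw [← hB'eq]; exact hB'B
      exact joinRefines_antisymm' hBanti hAanti hBA hArefB
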